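/- Let (M, η, μ) be a monad on a category C with binary coproducts, X an object, and a : MX → X a morphism. Then [id_X, a] : X + MX → X is an Eilenberg–Moore algebra for the semifree monad M^s if and only if a is an M-semialgebra (i.e., a ∘ Ma = a ∘ μ_X). -/

import Mathlib

open CategoryTheory CategoryTheory.Limits

universe v u

variable {C : Type u} [Category.{v} C] [HasBinaryCoproducts C]

/-- The underlying functor `Id + M` of the semifree monad. -/
noncomputable def MsF (M : Monad C) : C ⥤ C where
  obj X := X ⨿ M.obj X
  map f := coprod.map f (M.map f)

/-- The unit of the semifree monad: the left coproduct injection. -/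
noncomputable def ηs (M : Monad C) (X : C) : X ⟶ (MsF M).obj X := coprod.inl

/-- The multiplication of the semifree monad:
`μ^s = [id, inr ∘ μ ∘ M[η, id_M]]`. -/
noncomputable def μs (M : Monad C) (X : C) : (MsF M).obj ((MsF M).obj X) ⟶ (MsF M).obj X :=
  coprod.desc (𝟙 ((MsF M).obj X))
    (M.map (coprod.desc (M.η.app X) (𝟙 (M.obj X))) ≫ M.μ.app X ≫ coprod.inr)
/-- `[id_X, a]` is an Eilenberg--Moore algebra for the semifree monad `M^s`
iff `a` is an `M`-semialgebra. -/
theorem desc_id_isAlgebra_iff_semialgebra (M : Monad C) {X : C} (a : M.obj X ⟶ X) :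
    (ηs M X ≫ coprod.desc (𝟙 X) a = 𝟙 X ∧
      μs M X ≫ coprod.desc (𝟙 X) a =
        (MsF M).map (coprod.desc (𝟙 X) a) ≫ coprod.desc (𝟙 X) a) ↔
    M.map a ≫ a = M.μ.app X ≫ a := by
  constructor
  · rintro ⟨-, h⟩
    have h' := congrArg (fun f =>
      (M.map (coprod.inr : M.obj X ⟶ X ⨿ M.obj X) ≫
        (coprod.inr : (M : C ⥤ C).obj (X ⨿ M.obj X) ⟶ (MsF M).obj ((MsF M).obj X))) ≫ f) h
    simp [MsF, μs, ← Functor.map_comp_assoc] at h'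
    erw [coprod.inr_desc, coprod.inr_desc_assoc] at h'
    rw [Category.assoc, Category.assoc] at h'
    erw [coprod.inr_desc] at h'
    rw [← Functor.map_comp_assoc, ← Functor.map_comp_assoc] at h'
    erw [coprod.inr_desc, coprod.inr_desc] at h'
    simpa using h'.symm
  · intro hsemi
    refine ⟨by erw [coprod.inl_desc], ?_⟩
    apply coprod.hom_ext
    · simp [MsF, μs]
      erw [coprod.inl_desc_assoc, coprod.inl_desc]
      simp
    · have haη : a ≫ M.η.app X ≫ a = a := by
        have hn : a ≫ M.η.app X = M.η.app (M.obj X) ≫ M.map a := M.η.naturality a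
        rw [← Category.assoc, hn, Category.assoc, hsemi, Monad.left_unit_assoc]
      have key : M.map (coprod.desc (M.η.app X) (𝟙 (M.obj X))) ≫ M.μ.app X ≫ a =
          M.map (coprod.desc (𝟙 X) a) ≫ a := by
        calc M.map (coprod.desc (M.η.app X) (𝟙 (M.obj X))) ≫ M.μ.app X ≫ a
            = M.map (coprod.desc (M.η.app X) (𝟙 (M.obj X))) ≫ M.map a ≫ a := by rw [hsemi]
          _ = M.map (coprod.desc (M.η.app X ≫ a) a) ≫ a := by
              rw [← Functor.map_comp_assoc]; simp
          _ = M.map (coprod.desc (𝟙 X) a ≫ M.η.app X ≫ a) ≫ a := by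
              congr 2
              apply coprod.hom_ext <;> simp [haη]
          _ = M.map (coprod.desc (𝟙 X) a) ≫ M.map (M.η.app X ≫ a) ≫ a := by
              rw [← Functor.map_comp_assoc]
          _ = M.map (coprod.desc (𝟙 X) a) ≫ M.map (M.η.app X) ≫ M.map a ≫ a := by
              simp
          _ = M.map (coprod.desc (𝟙 X) a) ≫ a := by
              rw [hsemi]; simp
      simp [MsF, μs]
      erw [coprod.inr_desc_assoc, coprod.inr_desc]
      rw [Category.assoc, Category.assoc]
      erw [coprod.inr_desc]
      simpa using key
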